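/- Let g = ḡ + Δg with ‖Δg‖ ≤ β, and let W, R be Hermitian positive-semidefinite N×N matrices, ξ ≥ 0, σ² > 0. The robust constraint 'g^H W g − ξ g^H R g − ξσ² ≤ 0 for all Δg with ‖Δg‖ ≤ β' holds if there exists η ≥ 0 such that the (N+1)×(N+1) matrix [[ηI, 0],[0, −ηβ² + ξσ²]] − B^H M B ⪰ 0, where M = W − ξR and B = [I, ḡ]. -/

import Mathlib

open Matrix ComplexOrder

/-- LMI sufficiency for the robust information-leakage constraint (S-Procedure form). -/
theorem robust_leakage_lmi {N : ℕ} (gbar : Fin N → ℂ) (W R : Matrix (Fin N) (Fin N) ℂ)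
    (hW : W.PosSemidef) (hR : R.PosSemidef) (ξ σsq β : ℝ) (hξ : 0 ≤ ξ) (hσ : 0 < σsq)
    (h : ∃ η : ℝ, 0 ≤ η ∧
      (Matrix.fromBlocks ((η : ℂ) • (1 : Matrix (Fin N) (Fin N) ℂ)) 0 0
          (Matrix.of fun (_ _ : Fin 1) => ((-η * β ^ 2 + ξ * σsq : ℝ) : ℂ))
        - (Matrix.of fun (i : Fin N) (j : Fin N ⊕ Fin 1) =>
            Sum.elim (fun j' => if i = j' then (1 : ℂ) else 0) (fun _ => gbar i) j)ᴴ
          * (W - (ξ : ℂ) • R)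
          * (Matrix.of fun (i : Fin N) (j : Fin N ⊕ Fin 1) =>
            Sum.elim (fun j' => if i = j' then (1 : ℂ) else 0) (fun _ => gbar i) j)).PosSemidef) :
    ∀ Δg : Fin N → ℂ, Real.sqrt (∑ n, ‖Δg n‖ ^ 2) ≤ β →
      (star (gbar + Δg) ⬝ᵥ W *ᵥ (gbar + Δg)).re
        - ξ * (star (gbar + Δg) ⬝ᵥ R *ᵥ (gbar + Δg)).re - ξ * σsq ≤ 0 := by
  obtain ⟨η, hη, hA⟩ := h
  intro Δg hΔg
  set B : Matrix (Fin N) (Fin N ⊕ Fin 1) ℂ :=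
    Matrix.of fun (i : Fin N) (j : Fin N ⊕ Fin 1) =>
      Sum.elim (fun j' => if i = j' then (1 : ℂ) else 0) (fun _ => gbar i) j with hB
  set v : (Fin N ⊕ Fin 1) → ℂ := Sum.elim Δg (fun _ => 1) with hv
  have hS0 : 0 ≤ ∑ n, ‖Δg n‖ ^ 2 :=
    Finset.sum_nonneg fun n _ => sq_nonneg _
  have hβ0 : (0:ℝ) ≤ β := le_trans (Real.sqrt_nonneg _) hΔg
  have hSβ : ∑ n, ‖Δg n‖ ^ 2 ≤ β ^ 2 := by
    nlinarith [Real.sq_sqrt hS0, Real.sqrt_nonneg (∑ n, ‖Δg n‖ ^ 2)]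
  -- B *ᵥ v = gbar + Δg
  have hBv : B *ᵥ v = gbar + Δg := by
    funext i
    simp [hB, hv, mulVec, dotProduct, Fintype.sum_sum_type, ite_mul, add_comm]
  have hq := hA.dotProduct_mulVec_nonneg v
  rw [Complex.le_def] at hq
  have him := hq.2
  have hre := hq.1
  simp only [Complex.zero_re, Complex.zero_im] at hre him
  -- compute the quadratic form
  have hsplit : star v ⬝ᵥ
      ((Matrix.fromBlocks ((η : ℂ) • (1 : Matrix (Fin N) (Fin N) ℂ)) 0 0
          (Matrix.of fun (_ _ : Fin 1) => ((-η * β ^ 2 + ξ * σsq : ℝ) : ℂ)) - Bᴴ * (W - (ξ : ℂ) • R) * B) *ᵥ v)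
      = ((η : ℂ) * (star Δg ⬝ᵥ Δg) + ((-η * β ^ 2 + ξ * σsq : ℝ) : ℂ))
        - star (gbar + Δg) ⬝ᵥ (W - (ξ : ℂ) • R) *ᵥ (gbar + Δg) := by
    rw [sub_mulVec, dotProduct_sub]
    congr 1
    · have hstar : star v = Sum.elim (star Δg) (fun _ => (1:ℂ)) := by
        funext i; cases i <;> simp [hv]
      rw [hv, fromBlocks_mulVec, ← hv, hstar, sumElim_dotProduct_sumElim]
      simp [mulVec, dotProduct, hv, one_apply, mul_ite, Finset.mul_sum, smul_eq_mul, mul_comm, mul_left_comm, mul_assoc]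
    · rw [Matrix.mul_assoc, ← mulVec_mulVec, ← mulVec_mulVec, dotProduct_mulVec,
        ← star_mulVec, hBv]
  rw [hsplit] at hre
  set z := star (gbar + Δg) ⬝ᵥ (W - (ξ : ℂ) • R) *ᵥ (gbar + Δg) with hz
  have hdot : (star Δg ⬝ᵥ Δg) = ((∑ n, ‖Δg n‖ ^ 2 : ℝ) : ℂ) := by
    push_cast
    simp [dotProduct, ← Complex.ofReal_pow, Complex.sq_norm, mul_comm, Complex.mul_conj]
  rw [hdot, ← Complex.ofReal_mul] at hre
  have hzW : z = star (gbar + Δg) ⬝ᵥ W *ᵥ (gbar + Δg)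
      - (ξ:ℂ) * (star (gbar + Δg) ⬝ᵥ R *ᵥ (gbar + Δg)) := by
    rw [hz, sub_mulVec, dotProduct_sub, smul_mulVec, dotProduct_smul, smul_eq_mul]
  have hzre : z.re = (star (gbar + Δg) ⬝ᵥ W *ᵥ (gbar + Δg)).re
      - ξ * (star (gbar + Δg) ⬝ᵥ R *ᵥ (gbar + Δg)).re := by
    rw [hzW]
    have hWre : (star (gbar + Δg) ⬝ᵥ W *ᵥ (gbar + Δg)).im = 0 := by
      have := hW.1
      have h1 : star (star (gbar + Δg) ⬝ᵥ W *ᵥ (gbar + Δg))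
          = star (gbar + Δg) ⬝ᵥ W *ᵥ (gbar + Δg) := by
        rw [← star_dotProduct_star, star_star, star_mulVec, ← dotProduct_mulVec, hW.1.eq]
      exact Complex.conj_eq_iff_im.mp h1
    have hRre : (star (gbar + Δg) ⬝ᵥ R *ᵥ (gbar + Δg)).im = 0 := by
      have h1 : star (star (gbar + Δg) ⬝ᵥ R *ᵥ (gbar + Δg))
          = star (gbar + Δg) ⬝ᵥ R *ᵥ (gbar + Δg) := by
        rw [← star_dotProduct_star, star_star, star_mulVec, ← dotProduct_mulVec, hR.1.eq]
      exact Complex.conj_eq_iff_im.mp h1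
    simp [Complex.sub_re, Complex.mul_re, hRre]
  have hre' : 0 ≤ η * (∑ n, ‖Δg n‖ ^ 2) + (-η * β ^ 2 + ξ * σsq) - z.re := by
    rw [Complex.sub_re, Complex.add_re, Complex.ofReal_re, Complex.ofReal_re] at hre
    exact hre
  rw [hzre] at hre'
  nlinarith [mul_nonneg hη (sub_nonneg.mpr hSβ)]
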